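/- In the QC model, for arbitrary deterministic initial condition x(0) ∈ ℝ^N, the state sequence converges almost surely to the consensus subspace: ℙ[lim_{i→∞} ρ(x(i), 𝒞) = 0] = 1, where ρ(y, 𝒞) = inf_{z∈𝒞} ‖y − z‖ (equivalently, ‖x(i)_{𝒞⊥}‖ → 0 almost surely). -/

import Mathlib

open MeasureTheory ProbabilityTheory Filter Finset

open Topology
open scoped NNReal ENNReal
set_option maxHeartbeats 2000000

noncomputable section

/-- Euclidean norm on `Fin N → ℝ`. -/
def euclNorm {N : ℕ} (y : Fin N → ℝ) : ℝ := Real.sqrt (∑ n, (y n) ^ 2)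

/-- Quadratic form `yᵀ A y`. -/
def quadForm {N : ℕ} (A : Matrix (Fin N) (Fin N) ℝ) (y : Fin N → ℝ) : ℝ :=
  ∑ n, y n * A.mulVec y n

/-- Componentwise average `(1/N) 𝟏ᵀ y`. -/
def avgOf {N : ℕ} (y : Fin N → ℝ) : ℝ := (∑ n, y n) / N

/-- Orthogonal projection of `y` onto the orthogonal complement of the consensus
subspace `𝒞 = {a𝟏 : a ∈ ℝ}`. -/
def perpOf {N : ℕ} (y : Fin N → ℝ) : Fin N → ℝ := fun n => y n - avgOf y

/-- The sequence `g(i) = α(i)² max(λ_N³/λ₂ + 4N²λ_N/λ₂, 2MΔ²λ_N/3)`. -/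
def gseq (N M : ℕ) (Δ lam2 lamN : ℝ) (α : ℕ → ℝ) (i : ℕ) : ℝ :=
  α i ^ 2 * max (lamN ^ 3 / lam2 + 4 * N ^ 2 * lamN / lam2) (2 * M * Δ ^ 2 * lamN / 3)

/-- The QC (dithered quantized consensus with random link failures) model. -/
structure QCModel (N : ℕ) (Δ : ℝ) (M : ℕ) (α : ℕ → ℝ)
    (Lbar : Matrix (Fin N) (Fin N) ℝ) (lam2 lamN : ℝ)
    {Ω : Type} [mΩ : MeasurableSpace Ω] (Pr : Measure Ω)
    (x0 : Fin N → ℝ)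
    (x : ℕ → Ω → Fin N → ℝ)
    (L : ℕ → Ω → Matrix (Fin N) (Fin N) ℝ)
    (Υ Ψ : ℕ → Ω → Fin N → ℝ)
    (ℱ : Filtration ℕ mΩ) : Prop where
  hprob : IsProbabilityMeasure Pr
  hN : 2 ≤ N
  hΔ : 0 < Δ
  hM : 1 ≤ M
  hα_pos : ∀ i, 0 < α i
  hα_div : Tendsto (fun n => ∑ i ∈ Finset.range n, α i) atTop atTop
  hα_sq : Summable fun i => α i ^ 2
  hLbar_symm : Lbar.IsSymm
  hLbar_psd : Lbar.PosSemidef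
  hLbar_one : Lbar.mulVec 1 = 0
  hlam2_pos : 0 < lam2
  hlam_le : lam2 ≤ lamN
  hspec_lo : ∀ y : Fin N → ℝ, ∑ n, y n = 0 → lam2 * euclNorm y ^ 2 ≤ quadForm Lbar y
  hspec_hi : ∀ y : Fin N → ℝ, ∑ n, y n = 0 → quadForm Lbar y ≤ lamN * euclNorm y ^ 2
  hx0 : ∀ ω, x 0 ω = x0
  hL_meas : ∀ i n m, Measurable fun ω => L i ω n m
  hΥ_meas : ∀ i, Measurable (Υ i)
  hΨ_meas : ∀ i, Measurable (Ψ i)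
  hL_symm : ∀ i ω, (L i ω).IsSymm
  hL_one : ∀ i, ∀ᵐ ω ∂Pr, (L i ω).mulVec 1 = 0
  hL_mean : ∀ i n m, ∫ ω, L i ω n m ∂Pr = Lbar n m
  hL_op : ∀ i, ∀ᵐ ω ∂Pr, ∀ y : Fin N → ℝ,
    euclNorm ((L i ω - Lbar).mulVec y) ≤ 2 * N * euclNorm y
  hΥ_L2 : ∀ i, MemLp (Υ i) 2 Pr
  hΨ_L2 : ∀ i, MemLp (Ψ i) 2 Pr
  hΥ_mean : ∀ i n, ∫ ω, Υ i ω n ∂Pr = 0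
  hΨ_mean : ∀ i n, ∫ ω, Ψ i ω n ∂Pr = 0
  hvar_eq : ∀ i, ∫ ω, euclNorm (Υ i ω) ^ 2 ∂Pr = ∫ ω, euclNorm (Ψ i ω) ^ 2 ∂Pr
  hvar_le : ∀ i, ∫ ω, euclNorm (Υ i ω) ^ 2 ∂Pr ≤ M * Δ ^ 2 / 6
  hℱ : ∀ i, ℱ i = ⨆ j ∈ Set.Iio i,
      (MeasurableSpace.comap (fun ω n m => L j ω n m) inferInstance ⊔
       MeasurableSpace.comap (Υ j) inferInstance ⊔
       MeasurableSpace.comap (Ψ j) inferInstance)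
  hindep : ∀ i, iIndep
      ![MeasurableSpace.comap (fun ω n m => L i ω n m) inferInstance,
        MeasurableSpace.comap (Υ i) inferInstance,
        MeasurableSpace.comap (Ψ i) inferInstance,
        ℱ i] Pr
  hrec : ∀ i ω, x (i + 1) ω = x i ω - α i • ((L i ω).mulVec (x i ω) + Υ i ω + Ψ i ω)

namespace QCAux

/-- Product of `(1 + a j)⁻¹`. -/
def Aprod (a : ℕ → ℝ) (n : ℕ) : ℝ := ∏ j ∈ Finset.range n, (1 + a j)⁻¹

lemma Aprod_pos {a : ℕ → ℝ} (ha : ∀ n, 0 ≤ a n) (n : ℕ) : 0 < Aprod a n := by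
  apply Finset.prod_pos; intro j _; have := ha j; positivity

lemma Aprod_le_one {a : ℕ → ℝ} (ha : ∀ n, 0 ≤ a n) (n : ℕ) : Aprod a n ≤ 1 := by
  apply Finset.prod_le_one
  · intro j _; have := ha j; positivity
  · intro j _
    rw [inv_le_one_iff₀]; right; linarith [ha j]

lemma Aprod_succ (a : ℕ → ℝ) (n : ℕ) :
    Aprod a (n + 1) = Aprod a n * (1 + a n)⁻¹ := by
  simp [Aprod, Finset.prod_range_succ, mul_comm]

lemma Aprod_antitone {a : ℕ → ℝ} (ha : ∀ n, 0 ≤ a n) : Antitone (Aprod a) := by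
  apply antitone_nat_of_succ_le
  intro n
  rw [Aprod_succ]
  calc Aprod a n * (1 + a n)⁻¹ ≤ Aprod a n * 1 := by
        apply mul_le_mul_of_nonneg_left _ (Aprod_pos ha n).le
        rw [inv_le_one_iff₀]; right; linarith [ha n]
    _ = Aprod a n := mul_one _

lemma Aprod_ge {a : ℕ → ℝ} (ha : ∀ n, 0 ≤ a n) (hsum : Summable a) (n : ℕ) :
    Real.exp (-∑' j, a j) ≤ Aprod a n := by
  have h1 : (∏ j ∈ Finset.range n, (1 + a j)) ≤ Real.exp (∑' j, a j) := by
    calc (∏ j ∈ Finset.range n, (1 + a j)) ≤ ∏ j ∈ Finset.range n, Real.exp (a j) := by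
          apply Finset.prod_le_prod
          · intro j _; linarith [ha j]
          · intro j _; linarith [Real.add_one_le_exp (a j)]
      _ = Real.exp (∑ j ∈ Finset.range n, a j) := by rw [Real.exp_sum]
      _ ≤ Real.exp (∑' j, a j) := by
          apply Real.exp_le_exp.2
          exact Summable.sum_le_tsum _ (fun j _ => ha j) hsum
  have h2 : Aprod a n = (∏ j ∈ Finset.range n, (1 + a j))⁻¹ := by
    rw [Aprod, ← Finset.prod_inv_distrib]
  rw [h2, Real.exp_neg]
  apply inv_anti₀ _ h1
  apply Finset.prod_pos; intro j _; linarith [ha j]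

/-- The deterministic pathwise limit argument. -/
lemma path_limit {α a cseq : ℕ → ℝ} {V : ℕ → ℝ} {lam2 : ℝ}
    (hlam2 : 0 < lam2) (hαpos : ∀ n, 0 < α n)
    (hdiv : Tendsto (fun n => ∑ i ∈ Finset.range n, α i) atTop atTop)
    (ha : ∀ n, 0 ≤ a n) (hasum : Summable a)
    (hc : ∀ n, 0 ≤ cseq n) (hcsum : Summable cseq)
    (hV : ∀ n, 0 ≤ V n)
    (hU : ∃ c, Tendsto (fun n => Aprod a n * V n +
      ∑ j ∈ Finset.range n, Aprod a (j + 1) * (2 * lam2 * α j * V j - cseq j))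
      atTop (𝓝 c)) :
    Tendsto V atTop (𝓝 0) := by
  obtain ⟨c, hc'⟩ := hU
  have hApos : ∀ n, 0 < Aprod a n := Aprod_pos ha
  have hAub : ∀ n, Aprod a n ≤ 1 := Aprod_le_one ha
  have hAlb : ∀ n, Real.exp (-∑' j, a j) ≤ Aprod a n := Aprod_ge ha hasum
  set ε := Real.exp (-∑' j, a j) with hε
  have hεpos : 0 < ε := Real.exp_pos _
  -- the c-sum converges
  have hCsum : Summable (fun j => Aprod a (j + 1) * cseq j) := by
    apply Summable.of_nonneg_of_le (fun j => mul_nonneg (hApos _).le (hc j)) _ hcsum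
    intro j
    calc Aprod a (j + 1) * cseq j ≤ 1 * cseq j :=
          mul_le_mul_of_nonneg_right (hAub _) (hc j)
      _ = cseq j := one_mul _
  have hCt : Tendsto (fun n => ∑ j ∈ Finset.range n, Aprod a (j + 1) * cseq j) atTop
      (𝓝 (∑' j, Aprod a (j + 1) * cseq j)) := hCsum.hasSum.tendsto_sum_nat
  -- W n + A n * V n converges, where W is the nonneg b-sum
  have hsplit : ∀ n, (∑ j ∈ Finset.range n, Aprod a (j + 1) * (2 * lam2 * α j * V j))
        + Aprod a n * V n =
      (Aprod a n * V n + ∑ j ∈ Finset.range n, Aprod a (j + 1) * (2 * lam2 * α j * V j - cseq j))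
      + ∑ j ∈ Finset.range n, Aprod a (j + 1) * cseq j := by
    intro n
    rw [add_assoc, ← Finset.sum_add_distrib]
    have h : ∀ j, Aprod a (j + 1) * (2 * lam2 * α j * V j - cseq j) + Aprod a (j + 1) * cseq j
        = Aprod a (j + 1) * (2 * lam2 * α j * V j) := by intro j; ring
    simp_rw [h]
    ring
  have hWAV : Tendsto (fun n => (∑ j ∈ Finset.range n, Aprod a (j + 1) * (2 * lam2 * α j * V j))
      + Aprod a n * V n) atTop
      (𝓝 (c + ∑' j, Aprod a (j + 1) * cseq j)) := by
    have h := hc'.add hCt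
    apply h.congr'
    filter_upwards with n using (hsplit n).symm
  -- W is monotone and bounded above, so converges
  have hWmono : Monotone (fun n => ∑ j ∈ Finset.range n, Aprod a (j + 1) * (2 * lam2 * α j * V j)) := by
    apply monotone_nat_of_le_succ
    intro n
    rw [Finset.sum_range_succ]
    have h : 0 ≤ Aprod a (n + 1) * (2 * lam2 * α n * V n) := by
      have h1 := (hαpos n).le; have h2 := hV n; have h3 := (hApos (n+1)).le; positivity
    linarith
  obtain ⟨B, hB⟩ := hWAV.bddAbove_range
  have hWbdd : ∀ n, (∑ j ∈ Finset.range n, Aprod a (j + 1) * (2 * lam2 * α j * V j)) ≤ B := by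
    intro n
    have h1 : 0 ≤ Aprod a n * V n := mul_nonneg (hApos n).le (hV n)
    have h2 := hB (Set.mem_range_self (f := fun n => (∑ j ∈ Finset.range n, Aprod a (j + 1) * (2 * lam2 * α j * V j)) + Aprod a n * V n) n)
    linarith
  have hbsum : Summable (fun j => Aprod a (j + 1) * (2 * lam2 * α j * V j)) :=
    summable_of_sum_range_le (fun j => by
      have h1 := (hαpos j).le; have h2 := hV j; have h3 := (hApos (j+1)).le; positivity) hWbdd
  have hw : Tendsto (fun n => ∑ j ∈ Finset.range n, Aprod a (j + 1) * (2 * lam2 * α j * V j)) atTop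
      (𝓝 (∑' j, Aprod a (j + 1) * (2 * lam2 * α j * V j))) := hbsum.hasSum.tendsto_sum_nat
  -- hence A n * V n converges
  have hAV : Tendsto (fun n => Aprod a n * V n) atTop
      (𝓝 (c + (∑' j, Aprod a (j + 1) * cseq j) - ∑' j, Aprod a (j + 1) * (2 * lam2 * α j * V j))) := by
    have h := hWAV.sub hw
    apply h.congr
    intro n; ring
  -- A converges to a positive limit
  have hAconv : ∃ Ainf, ε ≤ Ainf ∧ Tendsto (Aprod a) atTop (𝓝 Ainf) := by
    rcases tendsto_of_antitone (Aprod_antitone ha) with h | ⟨Ainf, hAinf⟩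
    · exfalso
      obtain ⟨n, hn⟩ := (Filter.Tendsto.eventually_lt_atBot h 0).exists
      exact absurd (hApos n) (not_lt.2 hn.le)
    · exact ⟨Ainf, le_of_tendsto_of_tendsto tendsto_const_nhds hAinf
        (Eventually.of_forall hAlb), hAinf⟩
  obtain ⟨Ainf, hAinfge, hAinf⟩ := hAconv
  have hAinfpos : 0 < Ainf := lt_of_lt_of_le hεpos hAinfge
  -- V converges
  have hVconv : Tendsto V atTop (𝓝 ((c + (∑' j, Aprod a (j + 1) * cseq j) - ∑' j, Aprod a (j + 1) * (2 * lam2 * α j * V j)) / Ainf)) := by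
    have h := hAV.div hAinf (ne_of_gt hAinfpos)
    apply h.congr
    intro n
    simp only [Pi.div_apply]
    rw [mul_comm, mul_div_assoc, div_self (hApos n).ne', mul_one]
  set v := (c + (∑' j, Aprod a (j + 1) * cseq j) - ∑' j, Aprod a (j + 1) * (2 * lam2 * α j * V j)) / Ainf with hv
  rcases eq_or_lt_of_le (le_of_tendsto_of_tendsto tendsto_const_nhds hVconv
    (Eventually.of_forall hV)) with hz | hpos
  · rw [← hz] at hVconv; exact hVconv
  · exfalso
    obtain ⟨n₀, hn₀⟩ := eventually_atTop.1 (hVconv.eventually (eventually_gt_nhds (by linarith : v/2 < v)))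
    have hαsum : Summable α := by
      have h1 : Summable (fun j => α j * V j) := by
        apply Summable.of_nonneg_of_le (fun j => mul_nonneg (hαpos j).le (hV j))
          (fun j => ?_) (hbsum.mul_left (ε * 2 * lam2)⁻¹)
        have h2 : ε * (2 * lam2 * α j * V j) ≤ Aprod a (j + 1) * (2 * lam2 * α j * V j) := by
          apply mul_le_mul_of_nonneg_right (hAlb _)
          have h3 := (hαpos j).le; have h4 := hV j; positivity
        rw [inv_mul_eq_div, le_div_iff₀ (by positivity)]
        calc α j * V j * (ε * 2 * lam2) = ε * (2 * lam2 * α j * V j) := by ring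
          _ ≤ Aprod a (j + 1) * (2 * lam2 * α j * V j) := h2
      have h2 : Summable (fun j => α (j + n₀) * V (j + n₀)) := (summable_nat_add_iff n₀).2 h1
      have h3 : Summable (fun j => α (j + n₀)) := by
        apply Summable.of_nonneg_of_le (fun j => (hαpos _).le) (fun j => ?_)
          (h2.mul_left (v/2)⁻¹)
        rw [inv_mul_eq_div, le_div_iff₀ (by linarith)]
        calc α (j + n₀) * (v/2) = v/2 * α (j + n₀) := by ring
          _ ≤ V (j + n₀) * α (j + n₀) :=
            mul_le_mul_of_nonneg_right (hn₀ _ (Nat.le_add_left _ _)).le (hαpos _).le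
          _ = α (j + n₀) * V (j + n₀) := by ring
      exact (summable_nat_add_iff n₀).1 h3
    exact not_tendsto_atTop_of_tendsto_nhds hαsum.hasSum.tendsto_sum_nat hdiv


variable {N : ℕ}

lemma euclNorm_nonneg (y : Fin N → ℝ) : 0 ≤ euclNorm y := Real.sqrt_nonneg _

lemma euclNorm_sq (y : Fin N → ℝ) : euclNorm y ^ 2 = ∑ n, y n ^ 2 := by
  rw [euclNorm, Real.sq_sqrt]
  positivity

lemma sq_le_euclNorm_sq (y : Fin N → ℝ) (n : Fin N) : y n ^ 2 ≤ euclNorm y ^ 2 := by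
  rw [euclNorm_sq]
  exact Finset.single_le_sum (f := fun m => y m ^ 2) (fun m _ => sq_nonneg _) (Finset.mem_univ n)

lemma abs_le_euclNorm (y : Fin N → ℝ) (n : Fin N) : |y n| ≤ euclNorm y := by
  have h := sq_le_euclNorm_sq y n
  have := euclNorm_nonneg y
  nlinarith [abs_nonneg (y n), sq_abs (y n)]

lemma euclNorm_le_of_sq_le {y : Fin N → ℝ} {c : ℝ} (hc : 0 ≤ c)
    (h : ∑ n, y n ^ 2 ≤ c ^ 2) : euclNorm y ≤ c := by
  rw [euclNorm]
  rw [show c = Real.sqrt (c ^ 2) by rw [Real.sqrt_sq hc]]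
  exact Real.sqrt_le_sqrt h

/-- `euclNorm` as a norm in `EuclideanSpace`. -/
lemma euclNorm_eq_norm (y : Fin N → ℝ) :
    euclNorm y = ‖(WithLp.equiv 2 (Fin N → ℝ)).symm y‖ := by
  rw [EuclideanSpace.norm_eq, euclNorm]
  congr 1
  apply Finset.sum_congr rfl
  intro n _
  rw [WithLp.equiv_symm_apply, WithLp.ofLp_toLp, Real.norm_eq_abs, sq_abs]

lemma euclNorm_add_le (y z : Fin N → ℝ) :
    euclNorm (y + z) ≤ euclNorm y + euclNorm z := by
  rw [euclNorm_eq_norm, euclNorm_eq_norm, euclNorm_eq_norm]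
  rw [show (WithLp.equiv 2 (Fin N → ℝ)).symm (y + z)
    = (WithLp.equiv 2 (Fin N → ℝ)).symm y + (WithLp.equiv 2 (Fin N → ℝ)).symm z from rfl]
  exact norm_add_le _ _

lemma sum_perpOf (hN : 0 < N) (y : Fin N → ℝ) : ∑ n, perpOf y n = 0 := by
  simp only [perpOf, Finset.sum_sub_distrib, Finset.sum_const, Finset.card_univ,
    Fintype.card_fin, nsmul_eq_mul, avgOf]
  field_simp
  ring

lemma inner_perpOf {p : Fin N → ℝ} (hp : ∑ n, p n = 0) (w : Fin N → ℝ) :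
    ∑ n, p n * perpOf w n = ∑ n, p n * w n := by
  simp only [perpOf, mul_sub, Finset.sum_sub_distrib]
  rw [← Finset.sum_mul, hp, zero_mul, sub_zero]

lemma perpOf_sq_le (w : Fin N → ℝ) : ∑ n, perpOf w n ^ 2 ≤ ∑ n, w n ^ 2 := by
  rcases Nat.eq_zero_or_pos N with h | h
  · subst h; simp
  have expand : ∑ n, perpOf w n ^ 2
      = ∑ n, w n ^ 2 - 2 * avgOf w * ∑ n, w n + N * avgOf w ^ 2 := by
    have e : ∀ n, perpOf w n ^ 2 = w n ^ 2 - 2 * avgOf w * w n + avgOf w ^ 2 := by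
      intro n; simp only [perpOf]; ring
    simp_rw [e]
    rw [Finset.sum_add_distrib, Finset.sum_sub_distrib, ← Finset.mul_sum, Finset.sum_const,
      Finset.card_univ, Fintype.card_fin, nsmul_eq_mul]
  rw [expand, avgOf]
  have hN' : (0:ℝ) < N := Nat.cast_pos.2 h
  have : 2 * ((∑ n, w n) / N) * ∑ n, w n - N * ((∑ n, w n) / N) ^ 2
      = (∑ n, w n) ^ 2 / N := by field_simp; ring
  nlinarith [sq_nonneg (∑ n, w n), div_nonneg (sq_nonneg (∑ n, w n)) hN'.le]

lemma perpOf_sub_smul (x w : Fin N → ℝ) (c : ℝ) (n : Fin N) :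
    perpOf (x - c • w) n = perpOf x n - c * perpOf w n := by
  have havg : avgOf (x - c • w) = avgOf x - c * avgOf w := by
    simp only [avgOf, Pi.sub_apply, Pi.smul_apply, smul_eq_mul, Finset.sum_sub_distrib,
      ← Finset.mul_sum]
    ring
  simp only [perpOf, Pi.sub_apply, Pi.smul_apply, smul_eq_mul, havg]
  ring

/-- symmetric swap -/
lemma symm_swap {A : Matrix (Fin N) (Fin N) ℝ} (hA : A.IsSymm) (u v : Fin N → ℝ) :
    ∑ n, u n * A.mulVec v n = ∑ n, v n * A.mulVec u n := by
  simp only [Matrix.mulVec, dotProduct, Finset.mul_sum]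
  rw [Finset.sum_comm]
  apply Finset.sum_congr rfl; intro n _
  apply Finset.sum_congr rfl; intro m _
  have : A n m = A m n := by
    conv_lhs => rw [← hA]
    rfl
  rw [this]; ring

lemma sum_mulVec_eq_zero {A : Matrix (Fin N) (Fin N) ℝ} (hA : A.IsSymm)
    (hone : A.mulVec 1 = 0) (v : Fin N → ℝ) : ∑ n, A.mulVec v n = 0 := by
  have h : ∑ n, A.mulVec v n = ∑ n, v n * A.mulVec 1 n := by
    rw [← symm_swap hA]
    apply Finset.sum_congr rfl; intro n _
    simp [Matrix.mulVec, dotProduct]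
  rw [h, hone]
  simp

/-- Cauchy–Schwarz for the PSD form, giving the operator bound. -/
lemma mulVec_euclNorm_le {A : Matrix (Fin N) (Fin N) ℝ} {lamN : ℝ}
    (hA : A.IsSymm) (hpsd : A.PosSemidef) (hone : A.mulVec 1 = 0)
    (hlamN : 0 ≤ lamN)
    (hhi : ∀ y : Fin N → ℝ, ∑ n, y n = 0 → quadForm A y ≤ lamN * euclNorm y ^ 2)
    (p : Fin N → ℝ) (hp : ∑ n, p n = 0) :
    euclNorm (A.mulVec p) ≤ lamN * euclNorm p := by
  set z := A.mulVec p with hz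
  have hzsum : ∑ n, z n = 0 := sum_mulVec_eq_zero hA hone p
  -- B(p,z) = ∑ z² via symmetry
  have hBpz : ∑ n, p n * A.mulVec z n = ∑ n, z n ^ 2 := by
    rw [symm_swap hA]
    apply Finset.sum_congr rfl; intro n _
    rw [← hz, sq]
  -- quadratic nonneg in t: q(p + t z) ≥ 0
  have hq : ∀ t : ℝ, 0 ≤ quadForm A z * (t * t) + (2 * ∑ n, p n * A.mulVec z n) * t
      + quadForm A p := by
    intro t
    have h0 := hpsd.dotProduct_mulVec_nonneg (p + t • z)
    simp only [star_trivial] at h0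
    have hswap := symm_swap hA z p
    have hexpand : dotProduct (p + t • z) (A.mulVec (p + t • z))
        = quadForm A z * (t * t) + (2 * ∑ n, p n * A.mulVec z n) * t + quadForm A p := by
      simp only [dotProduct, Matrix.mulVec_add, Matrix.mulVec_smul, quadForm,
        Pi.add_apply, Pi.smul_apply, smul_eq_mul]
      have e : ∀ n, (p n + t * z n) * (A.mulVec p n + t * A.mulVec z n)
          = (t * t) * (z n * A.mulVec z n) + t * (p n * A.mulVec z n)
            + t * (z n * A.mulVec p n) + p n * A.mulVec p n := by
        intro n; ring
      simp_rw [e]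
      rw [Finset.sum_add_distrib, Finset.sum_add_distrib, Finset.sum_add_distrib,
        ← Finset.mul_sum, ← Finset.mul_sum, ← Finset.mul_sum, hswap]
      ring
    rw [hexpand] at h0
    exact h0
  have hdisc := discrim_le_zero (a := quadForm A z)
    (b := 2 * ∑ n, p n * A.mulVec z n) (c := quadForm A p) hq
  rw [discrim] at hdisc
  have hCS : (∑ n, z n ^ 2) ^ 2 ≤ quadForm A p * quadForm A z := by
    rw [← hBpz]; nlinarith [hdisc]
  have hqp : quadForm A p ≤ lamN * euclNorm p ^ 2 := hhi p hp
  have hqz : quadForm A z ≤ lamN * euclNorm z ^ 2 := hhi z hzsum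
  have hqp0 : 0 ≤ quadForm A p := hpsd.dotProduct_mulVec_nonneg p
  have hqz0 : 0 ≤ quadForm A z := hpsd.dotProduct_mulVec_nonneg z
  have hzsq : euclNorm z ^ 2 = ∑ n, z n ^ 2 := euclNorm_sq z
  have hpsq : euclNorm p ^ 2 = ∑ n, p n ^ 2 := euclNorm_sq p
  -- (∑z²)² ≤ lamN² ∑p² ∑z²
  have key : (∑ n, z n ^ 2) ^ 2 ≤ lamN ^ 2 * (∑ n, p n ^ 2) * (∑ n, z n ^ 2) := by
    calc (∑ n, z n ^ 2) ^ 2 ≤ quadForm A p * quadForm A z := hCS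
      _ ≤ (lamN * euclNorm p ^ 2) * (lamN * euclNorm z ^ 2) := by
          apply mul_le_mul hqp hqz hqz0
          exact mul_nonneg hlamN (sq_nonneg _)
      _ = lamN ^ 2 * (∑ n, p n ^ 2) * (∑ n, z n ^ 2) := by rw [hzsq, hpsq]; ring
  rcases eq_or_lt_of_le (Finset.sum_nonneg (fun n _ => sq_nonneg (z n))) with hz0 | hz0
  · have : euclNorm z = 0 := by rw [euclNorm, ← hz0, Real.sqrt_zero]
    rw [this]
    exact mul_nonneg hlamN (euclNorm_nonneg p)
  · have h2 : ∑ n, z n ^ 2 ≤ lamN ^ 2 * ∑ n, p n ^ 2 := by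
      nlinarith [key]
    apply euclNorm_le_of_sq_le (mul_nonneg hlamN (euclNorm_nonneg p))
    calc ∑ n, z n ^ 2 ≤ lamN ^ 2 * ∑ n, p n ^ 2 := h2
      _ = (lamN * euclNorm p) ^ 2 := by rw [hpsq.symm]; ring


lemma euclNorm_single {N : ℕ} (m : Fin N) : euclNorm (fun n => if n = m then (1:ℝ) else 0) = 1 := by
  have h : ∑ n, (if n = m then (1:ℝ) else 0) ^ 2 = 1 := by
    rw [Finset.sum_eq_single m]
    · simp
    · intro k _ hk; rw [if_neg hk]; ring
    · intro hm; exact absurd (Finset.mem_univ m) hm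
  rw [euclNorm, h, Real.sqrt_one]

lemma entry_bound {N : ℕ} {Li Lbar : Matrix (Fin N) (Fin N) ℝ}
    (hop : ∀ y : Fin N → ℝ, euclNorm ((Li - Lbar).mulVec y) ≤ 2 * N * euclNorm y)
    (n m : Fin N) : |Li n m| ≤ |Lbar n m| + 2 * N := by
  have h1 := hop (fun k => if k = m then (1:ℝ) else 0)
  rw [euclNorm_single, mul_one] at h1
  have h2 : (Li - Lbar).mulVec (fun k => if k = m then (1:ℝ) else 0) n
      = Li n m - Lbar n m := by
    simp only [Matrix.mulVec, dotProduct, mul_ite, mul_one, mul_zero]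
    rw [Finset.sum_ite_eq' Finset.univ m (fun k => (Li - Lbar) n k)]
    simp [Matrix.sub_apply]
  have h3 := abs_le_euclNorm ((Li - Lbar).mulVec (fun k => if k = m then (1:ℝ) else 0)) n
  rw [h2] at h3
  have h4 : |Li n m - Lbar n m| ≤ 2 * N := le_trans h3 h1
  calc |Li n m| = |Lbar n m + (Li n m - Lbar n m)| := by ring_nf
    _ ≤ |Lbar n m| + |Li n m - Lbar n m| := abs_add_le _ _
    _ ≤ |Lbar n m| + 2 * N := by linarith

lemma integrable_mul_L2 {Ω : Type} [mΩ : MeasurableSpace Ω] {μ : MeasureTheory.Measure Ω}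
    {f g : Ω → ℝ} (hf : MeasureTheory.MemLp f 2 μ) (hg : MeasureTheory.MemLp g 2 μ) :
    MeasureTheory.Integrable (fun ω => f ω * g ω) μ := by
  apply MeasureTheory.Integrable.mono'
    ((hf.integrable_sq.add hg.integrable_sq).const_mul (1/2 : ℝ))
    (hf.aestronglyMeasurable.mul hg.aestronglyMeasurable)
  filter_upwards with ω
  simp only [Pi.add_apply, Pi.mul_apply]
  rw [Real.norm_eq_abs, abs_mul]
  nlinarith [sq_nonneg (|f ω| - |g ω|), sq_abs (f ω), sq_abs (g ω), abs_nonneg (f ω),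
    abs_nonneg (g ω)]

lemma quadForm_eq_sum_prod {N : ℕ} (A : Matrix (Fin N) (Fin N) ℝ) (y : Fin N → ℝ) :
    quadForm A y = ∑ q : Fin N × Fin N, y q.1 * y q.2 * A q.1 q.2 := by
  rw [quadForm, Fintype.sum_prod_type]
  apply Finset.sum_congr rfl; intro n _
  simp only [Matrix.mulVec, dotProduct, Finset.mul_sum]
  apply Finset.sum_congr rfl; intro m _
  ring

lemma inner_mulVec_eq_sum_prod {N : ℕ} (A : Matrix (Fin N) (Fin N) ℝ) (y : Fin N → ℝ) :
    ∑ n, y n * A.mulVec y n = ∑ q : Fin N × Fin N, y q.1 * y q.2 * A q.1 q.2 :=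
  quadForm_eq_sum_prod A y

lemma ae_eq_sum {ι Ω : Type*} [MeasurableSpace Ω] {μ : MeasureTheory.Measure Ω}
    (s : Finset ι) {f g : ι → Ω → ℝ} (h : ∀ i ∈ s, f i =ᵐ[μ] g i) :
    (∑ i ∈ s, f i) =ᵐ[μ] ∑ i ∈ s, g i := by
  classical
  induction s using Finset.induction_on with
  | empty => simp
  | insert _ _ his ih =>
    rename_i i s
    rw [Finset.sum_insert his, Finset.sum_insert his]
    exact (h i (Finset.mem_insert_self i s)).add
      (ih fun j hj => h j (Finset.mem_insert_of_mem hj))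
lemma step_bound (hN : 0 < N) {Lbar Li : Matrix (Fin N) (Fin N) ℝ} {lamN : ℝ}
    (hsymm : Lbar.IsSymm) (hpsd : Lbar.PosSemidef) (hone : Lbar.mulVec 1 = 0)
    (hlamN : 0 ≤ lamN)
    (hhi : ∀ y : Fin N → ℝ, ∑ n, y n = 0 → quadForm Lbar y ≤ lamN * euclNorm y ^ 2)
    (hLi_one : Li.mulVec 1 = 0)
    (hLi_op : ∀ y : Fin N → ℝ, euclNorm ((Li - Lbar).mulVec y) ≤ 2 * N * euclNorm y)
    (xv u v : Fin N → ℝ) {αi : ℝ} (hαi : 0 ≤ αi) :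
    ∑ n, perpOf (xv - αi • (Li.mulVec xv + u + v)) n ^ 2 ≤
      (1 + 3 * αi ^ 2 * (lamN + 2 * N) ^ 2) * ∑ n, perpOf xv n ^ 2
      - 2 * αi * (∑ n, perpOf xv n * Li.mulVec (perpOf xv) n)
      - 2 * αi * (∑ n, perpOf xv n * u n) - 2 * αi * (∑ n, perpOf xv n * v n)
      + 3 * αi ^ 2 * ((∑ n, u n ^ 2) + (∑ n, v n ^ 2)) := by
  set p := perpOf xv with hp
  have hpsum : ∑ n, p n = 0 := sum_perpOf hN xv
  set w := Li.mulVec xv + u + v with hw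
  -- Li.mulVec xv = Li.mulVec p
  have hLx : Li.mulVec xv = Li.mulVec p := by
    have hxv : xv = p + avgOf xv • (1 : Fin N → ℝ) := by
      funext n; simp [hp, perpOf]
    rw [hxv, Matrix.mulVec_add, Matrix.mulVec_smul, hLi_one]
    simp
  -- expansion
  have hexp : ∑ n, perpOf (xv - αi • w) n ^ 2
      = ∑ n, p n ^ 2 - 2 * αi * (∑ n, p n * perpOf w n) + αi ^ 2 * ∑ n, perpOf w n ^ 2 := by
    have e : ∀ n, perpOf (xv - αi • w) n ^ 2
        = p n ^ 2 - 2 * αi * (p n * perpOf w n) + αi ^ 2 * perpOf w n ^ 2 := by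
      intro n; rw [perpOf_sub_smul]; ring
    simp_rw [e]
    rw [Finset.sum_add_distrib, Finset.sum_sub_distrib, ← Finset.mul_sum, ← Finset.mul_sum]
  -- inner product term
  have hinner : ∑ n, p n * perpOf w n
      = (∑ n, p n * Li.mulVec p n) + (∑ n, p n * u n) + (∑ n, p n * v n) := by
    rw [inner_perpOf hpsum]
    have e : ∀ n, p n * w n = p n * Li.mulVec p n + p n * u n + p n * v n := by
      intro n
      rw [hw]
      simp only [Pi.add_apply, hLx]
      ring
    simp_rw [e]
    rw [Finset.sum_add_distrib, Finset.sum_add_distrib]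
  -- quadratic term bound
  have hLpbound : euclNorm (Li.mulVec p) ≤ (lamN + 2 * N) * euclNorm p := by
    have h1 : Li.mulVec p = (Li - Lbar).mulVec p + Lbar.mulVec p := by
      rw [Matrix.sub_mulVec]; funext n; simp
    rw [h1]
    calc euclNorm ((Li - Lbar).mulVec p + Lbar.mulVec p)
        ≤ euclNorm ((Li - Lbar).mulVec p) + euclNorm (Lbar.mulVec p) := euclNorm_add_le _ _
      _ ≤ 2 * N * euclNorm p + lamN * euclNorm p :=
          add_le_add (hLi_op p) (mulVec_euclNorm_le hsymm hpsd hone hlamN hhi p hpsum)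
      _ = (lamN + 2 * N) * euclNorm p := by ring
  have hLpsq : ∑ n, Li.mulVec p n ^ 2 ≤ (lamN + 2 * N) ^ 2 * ∑ n, p n ^ 2 := by
    have h1 : euclNorm (Li.mulVec p) ^ 2 ≤ ((lamN + 2 * N) * euclNorm p) ^ 2 := by
      apply sq_le_sq' _ hLpbound
      have h2 := euclNorm_nonneg (Li.mulVec p)
      have h3 := euclNorm_nonneg p
      have h4 : (0:ℝ) ≤ 2 * N := by positivity
      nlinarith
    rw [euclNorm_sq] at h1
    calc ∑ n, Li.mulVec p n ^ 2 ≤ ((lamN + 2 * N) * euclNorm p) ^ 2 := h1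
      _ = (lamN + 2 * N) ^ 2 * ∑ n, p n ^ 2 := by rw [← euclNorm_sq]; ring
  have hqbound : ∑ n, perpOf w n ^ 2
      ≤ 3 * ((lamN + 2 * N) ^ 2 * ∑ n, p n ^ 2 + (∑ n, u n ^ 2) + (∑ n, v n ^ 2)) := by
    calc ∑ n, perpOf w n ^ 2 ≤ ∑ n, w n ^ 2 := perpOf_sq_le w
      _ ≤ ∑ n, (3 * (Li.mulVec p n ^ 2 + u n ^ 2 + v n ^ 2)) := by
          apply Finset.sum_le_sum
          intro n _
          rw [hw]
          simp only [Pi.add_apply, hLx]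
          nlinarith [sq_nonneg (Li.mulVec p n - u n), sq_nonneg (Li.mulVec p n - v n),
            sq_nonneg (u n - v n)]
      _ = 3 * ((∑ n, Li.mulVec p n ^ 2) + (∑ n, u n ^ 2) + (∑ n, v n ^ 2)) := by
          rw [← Finset.mul_sum, Finset.sum_add_distrib, Finset.sum_add_distrib]
      _ ≤ 3 * ((lamN + 2 * N) ^ 2 * ∑ n, p n ^ 2 + (∑ n, u n ^ 2) + (∑ n, v n ^ 2)) := by
          have := hLpsq; linarith
  rw [hexp, hinner]
  have hαsq : (0:ℝ) ≤ αi ^ 2 := sq_nonneg _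
  nlinarith [mul_le_mul_of_nonneg_left hqbound hαsq]


end QCAux

theorem stmt_2 {N : ℕ} {Δ : ℝ} {M : ℕ} {α : ℕ → ℝ}
    {Lbar : Matrix (Fin N) (Fin N) ℝ} {lam2 lamN : ℝ}
    {Ω : Type} [mΩ : MeasurableSpace Ω] {Pr : Measure Ω}
    {x0 : Fin N → ℝ} {x : ℕ → Ω → Fin N → ℝ}
    {L : ℕ → Ω → Matrix (Fin N) (Fin N) ℝ} {Υ Ψ : ℕ → Ω → Fin N → ℝ}
    {ℱ : Filtration ℕ mΩ}
    (h : QCModel N Δ M α Lbar lam2 lamN Pr x0 x L Υ Ψ ℱ) :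
    ∀ᵐ ω ∂Pr, Tendsto (fun i => euclNorm (perpOf (x i ω))) atTop (nhds 0) := by
  classical
  haveI hPP := h.hprob
  have hNpos : 0 < N := Nat.lt_of_lt_of_le (by norm_num) h.hN
  have hlamN0 : (0:ℝ) ≤ lamN := le_trans h.hlam2_pos.le h.hlam_le
  have hK0' : (0:ℝ) ≤ lamN + 2 * N := by positivity
  -- the sequences
  set a : ℕ → ℝ := fun n => 3 * α n ^ 2 * (lamN + 2 * N) ^ 2 with ha_def
  set cs : ℕ → ℝ := fun n => α n ^ 2 * (M * Δ ^ 2) with hcs_def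
  have ha0 : ∀ n, 0 ≤ a n := fun n => by
    simp only [ha_def]; positivity
  have hcs0 : ∀ n, 0 ≤ cs n := fun n => by
    simp only [hcs_def]; positivity
  have hasum : Summable a := by
    apply (h.hα_sq.mul_right (3 * (lamN + 2 * (N:ℝ)) ^ 2)).congr
    intro n; simp only [ha_def]; ring
  have hcssum : Summable cs := h.hα_sq.mul_right _
  -- the Lyapunov process
  set Vf : ℕ → Ω → ℝ := fun i ω => ∑ n, perpOf (x i ω) n ^ 2 with hVf_def
  have hVnn : ∀ i ω, 0 ≤ Vf i ω := fun i ω => Finset.sum_nonneg fun n _ => sq_nonneg _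
  -- σ-algebras
  set mL : ℕ → MeasurableSpace Ω :=
    fun j => MeasurableSpace.comap (fun ω n m => L j ω n m) inferInstance with hmL_def
  set mU : ℕ → MeasurableSpace Ω :=
    fun j => MeasurableSpace.comap (Υ j) inferInstance with hmU_def
  set mP : ℕ → MeasurableSpace Ω :=
    fun j => MeasurableSpace.comap (Ψ j) inferInstance with hmP_def
  have hLmat_meas : ∀ j, Measurable (fun ω (n m : Fin N) => L j ω n m) := fun j =>
    measurable_pi_lambda _ fun n => measurable_pi_lambda _ fun m => h.hL_meas j n m
  have hmL_le : ∀ j, mL j ≤ mΩ := fun j => (hLmat_meas j).comap_le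
  have hmU_le : ∀ j, mU j ≤ mΩ := fun j => (h.hΥ_meas j).comap_le
  have hmP_le : ∀ j, mP j ≤ mΩ := fun j => (h.hΨ_meas j).comap_le
  have hmL_self : ∀ j (n m : Fin N), Measurable[mL j] (fun ω => L j ω n m) := by
    intro j n m
    have h1 : Measurable[mL j] (fun ω (n m : Fin N) => L j ω n m) :=
      measurable_iff_comap_le.2 le_rfl
    exact (measurable_pi_apply m).comp ((measurable_pi_apply n).comp h1)
  have hmU_self : ∀ j (n : Fin N), Measurable[mU j] (fun ω => Υ j ω n) := by
    intro j n
    have h1 : Measurable[mU j] (Υ j) := measurable_iff_comap_le.2 le_rfl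
    exact (measurable_pi_apply n).comp h1
  have hmP_self : ∀ j (n : Fin N), Measurable[mP j] (fun ω => Ψ j ω n) := by
    intro j n
    have h1 : Measurable[mP j] (Ψ j) := measurable_iff_comap_le.2 le_rfl
    exact (measurable_pi_apply n).comp h1
  have hsupℱ : ∀ j i, j < i → (mL j ⊔ mU j ⊔ mP j) ≤ ℱ i := by
    intro j i hj
    rw [h.hℱ i]
    exact le_biSup (fun j => MeasurableSpace.comap (fun ω n m => L j ω n m) inferInstance
      ⊔ MeasurableSpace.comap (Υ j) inferInstance
      ⊔ MeasurableSpace.comap (Ψ j) inferInstance) (Set.mem_Iio.2 hj)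
  have hmLℱ : ∀ j i, j < i → mL j ≤ ℱ i := fun j i hj =>
    le_trans (le_trans le_sup_left le_sup_left) (hsupℱ j i hj)
  have hmUℱ : ∀ j i, j < i → mU j ≤ ℱ i := fun j i hj =>
    le_trans (le_trans le_sup_right le_sup_left) (hsupℱ j i hj)
  have hmPℱ : ∀ j i, j < i → mP j ≤ ℱ i := fun j i hj =>
    le_trans le_sup_right (hsupℱ j i hj)
  -- the recursion, coordinatewise
  have hrecc : ∀ i (n : Fin N), (fun ω => x (i+1) ω n) = fun ω =>
      x i ω n - α i * ((∑ m, L i ω n m * x i ω m) + Υ i ω n + Ψ i ω n) := by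
    intro i n
    funext ω
    rw [h.hrec i ω]
    simp only [Pi.sub_apply, Pi.smul_apply, smul_eq_mul, Pi.add_apply,
      Matrix.mulVec, dotProduct]
  -- x is adapted
  have hxℱ : ∀ i (n : Fin N), Measurable[ℱ i] (fun ω => x i ω n) := by
    intro i
    induction i with
    | zero =>
      intro n
      have e : (fun ω => x 0 ω n) = fun _ => x0 n := funext fun ω => by rw [h.hx0]
      rw [e]; exact measurable_const
    | succ i ih =>
      intro n
      rw [hrecc i n]
      have hxi : ∀ m : Fin N, Measurable[ℱ (i+1)] fun ω => x i ω m :=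
        fun m => (ih m).mono (ℱ.mono (Nat.le_succ i)) le_rfl
      have hLi : ∀ m : Fin N, Measurable[ℱ (i+1)] fun ω => L i ω n m :=
        fun m => (hmL_self i n m).mono (hmLℱ i (i+1) (Nat.lt_succ_self i)) le_rfl
      have hUi : Measurable[ℱ (i+1)] fun ω => Υ i ω n :=
        (hmU_self i n).mono (hmUℱ i (i+1) (Nat.lt_succ_self i)) le_rfl
      have hPi : Measurable[ℱ (i+1)] fun ω => Ψ i ω n :=
        (hmP_self i n).mono (hmPℱ i (i+1) (Nat.lt_succ_self i)) le_rfl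
      exact (hxi n).sub ((((Finset.measurable_sum _ fun m _ =>
        (hLi m).mul (hxi m)).add hUi).add hPi).const_mul _)
  have hpℱ : ∀ i (n : Fin N), Measurable[ℱ i] (fun ω => perpOf (x i ω) n) := by
    intro i n
    have e : (fun ω => perpOf (x i ω) n)
        = fun ω => x i ω n - (∑ m, x i ω m) / N := by
      funext ω; simp [perpOf, avgOf]
    rw [e]
    exact (hxℱ i n).sub ((Finset.measurable_sum _ fun m _ => hxℱ i m).div_const _)
  have hVℱ : ∀ i, Measurable[ℱ i] (Vf i) := fun i =>
    Finset.measurable_sum _ fun n _ => (hpℱ i n).pow_const 2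
  -- L² facts
  have hΥc : ∀ i (n : Fin N), MemLp (fun ω => Υ i ω n) 2 Pr := by
    intro i n
    apply MemLp.of_le_mul (c := 1) (h.hΥ_L2 i)
      (((measurable_pi_apply n).comp (h.hΥ_meas i)).aestronglyMeasurable)
    filter_upwards with ω
    rw [one_mul]
    exact norm_le_pi_norm (Υ i ω) n
  have hΨc : ∀ i (n : Fin N), MemLp (fun ω => Ψ i ω n) 2 Pr := by
    intro i n
    apply MemLp.of_le_mul (c := 1) (h.hΨ_L2 i)
      (((measurable_pi_apply n).comp (h.hΨ_meas i)).aestronglyMeasurable)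
    filter_upwards with ω
    rw [one_mul]
    exact norm_le_pi_norm (Ψ i ω) n
  have hLbd : ∀ i (n m : Fin N), ∀ᵐ ω ∂Pr, |L i ω n m| ≤ |Lbar n m| + 2 * N := by
    intro i n m
    filter_upwards [h.hL_op i] with ω hω
    exact QCAux.entry_bound hω n m
  have hxL2 : ∀ i (n : Fin N), MemLp (fun ω => x i ω n) 2 Pr := by
    intro i
    induction i with
    | zero =>
      intro n
      have e : (fun ω => x 0 ω n) = fun _ => x0 n := funext fun ω => by rw [h.hx0]
      rw [e]; exact memLp_const _
    | succ i ih =>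
      intro n
      rw [hrecc i n]
      have hterm : ∀ m : Fin N, MemLp (fun ω => L i ω n m * x i ω m) 2 Pr := by
        intro m
        apply MemLp.of_le_mul (c := |Lbar n m| + 2 * N) (ih m)
          (((h.hL_meas i n m).mul ((hxℱ i m).mono (ℱ.le i) le_rfl)).aestronglyMeasurable)
        filter_upwards [hLbd i n m] with ω hb
        rw [Real.norm_eq_abs, Real.norm_eq_abs, Pi.mul_apply, abs_mul]
        exact mul_le_mul_of_nonneg_right hb (abs_nonneg _)
      have hsum : MemLp (fun ω => ∑ m, L i ω n m * x i ω m) 2 Pr :=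
        memLp_finsetSum Finset.univ (fun m _ => hterm m)
      have h1 : MemLp (fun ω => (∑ m, L i ω n m * x i ω m) + Υ i ω n + Ψ i ω n) 2 Pr :=
        (hsum.add (hΥc i n)).add (hΨc i n)
      exact (ih n).sub (h1.const_mul (α i))
  have hpL2 : ∀ i (n : Fin N), MemLp (fun ω => perpOf (x i ω) n) 2 Pr := by
    intro i n
    have e : (fun ω => perpOf (x i ω) n)
        = fun ω => x i ω n - (N:ℝ)⁻¹ * ∑ m, x i ω m := by
      funext ω; simp [perpOf, avgOf, div_eq_mul_inv]; ring
    rw [e]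
    have hsum : MemLp (fun ω => ∑ m, x i ω m) 2 Pr :=
      memLp_finsetSum Finset.univ (fun m _ => hxL2 i m)
    exact (hxL2 i n).sub (hsum.const_mul _)
  have hVL1 : ∀ i, Integrable (Vf i) Pr := fun i =>
    integrable_finset_sum _ fun n _ => (hpL2 i n).integrable_sq
  -- independence
  have hIndL : ∀ i, Indep (mL i) (ℱ i) Pr := by
    intro i
    have h4 := (h.hindep i).indep (i := (0 : Fin 4)) (j := (3 : Fin 4)) (by decide)
    simpa [hmL_def] using h4
  have hIndU : ∀ i, Indep (mU i) (ℱ i) Pr := by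
    intro i
    have h4 := (h.hindep i).indep (i := (1 : Fin 4)) (j := (3 : Fin 4)) (by decide)
    simpa [hmU_def] using h4
  have hIndP : ∀ i, Indep (mP i) (ℱ i) Pr := by
    intro i
    have h4 := (h.hindep i).indep (i := (2 : Fin 4)) (j := (3 : Fin 4)) (by decide)
    simpa [hmP_def] using h4
  -- the conditional one-step inequality
  have hcond : ∀ i, Pr[Vf (i+1)|ℱ i] ≤ᵐ[Pr]
      fun ω => (1 + a i) * Vf i ω - 2 * lam2 * α i * Vf i ω + cs i := by
    intro i
    set pf : Fin N → Ω → ℝ := fun n ω => perpOf (x i ω) n with hpf_def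
    set T1 : Ω → ℝ := ∑ q : Fin N × Fin N, (fun ω => pf q.1 ω * pf q.2 ω * L i ω q.1 q.2)
      with hT1_def
    set T2 : Ω → ℝ := ∑ n : Fin N, (fun ω => pf n ω * Υ i ω n) with hT2_def
    set T3 : Ω → ℝ := ∑ n : Fin N, (fun ω => pf n ω * Ψ i ω n) with hT3_def
    set Q1 : Ω → ℝ := fun ω => ∑ n, Υ i ω n ^ 2 with hQ1_def
    set Q2 : Ω → ℝ := fun ω => ∑ n, Ψ i ω n ^ 2 with hQ2_def
    set B1 : Ω → ℝ := fun ω => (1 + a i) * Vf i ω with hB1_def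
    set G : Ω → ℝ := B1 - (2 * α i) • T1 - (2 * α i) • T2
      - (2 * α i) • T3 + (3 * α i ^ 2) • Q1 + (3 * α i ^ 2) • Q2 with hG_def
    -- applications of the Pi sums
    have hT1app : ∀ ω, T1 ω = ∑ q : Fin N × Fin N, pf q.1 ω * pf q.2 ω * L i ω q.1 q.2 := by
      intro ω; rw [hT1_def]; simp [Finset.sum_apply]
    have hT2app : ∀ ω, T2 ω = ∑ n, pf n ω * Υ i ω n := by
      intro ω; rw [hT2_def]; simp [Finset.sum_apply]
    have hT3app : ∀ ω, T3 ω = ∑ n, pf n ω * Ψ i ω n := by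
      intro ω; rw [hT3_def]; simp [Finset.sum_apply]
    -- integrability
    have hT1tI : ∀ q : Fin N × Fin N, Integrable
        (fun ω => pf q.1 ω * pf q.2 ω * L i ω q.1 q.2) Pr := by
      intro q
      have hb := Integrable.bdd_mul (c := |Lbar q.1 q.2| + 2 * N)
        (QCAux.integrable_mul_L2 (hpL2 i q.1) (hpL2 i q.2))
        ((h.hL_meas i q.1 q.2).aestronglyMeasurable)
        (by filter_upwards [hLbd i q.1 q.2] with ω hω; rwa [Real.norm_eq_abs])
      exact hb.congr (Eventually.of_forall fun ω => by ring)
    have hT1I : Integrable T1 Pr := by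
      rw [hT1_def, Finset.sum_fn]; exact integrable_finset_sum _ fun q _ => hT1tI q
    have hT2tI : ∀ n : Fin N, Integrable (fun ω => pf n ω * Υ i ω n) Pr :=
      fun n => QCAux.integrable_mul_L2 (hpL2 i n) (hΥc i n)
    have hT3tI : ∀ n : Fin N, Integrable (fun ω => pf n ω * Ψ i ω n) Pr :=
      fun n => QCAux.integrable_mul_L2 (hpL2 i n) (hΨc i n)
    have hT2I : Integrable T2 Pr := by
      rw [hT2_def, Finset.sum_fn]; exact integrable_finset_sum _ fun n _ => hT2tI n
    have hT3I : Integrable T3 Pr := by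
      rw [hT3_def, Finset.sum_fn]; exact integrable_finset_sum _ fun n _ => hT3tI n
    have hQ1I : Integrable Q1 Pr :=
      integrable_finset_sum _ fun n _ => (hΥc i n).integrable_sq
    have hQ2I : Integrable Q2 Pr :=
      integrable_finset_sum _ fun n _ => (hΨc i n).integrable_sq
    have hLI : ∀ n m : Fin N, Integrable (fun ω => L i ω n m) Pr := by
      intro n m
      apply (integrable_const (|Lbar n m| + 2 * (N:ℝ))).mono'
        ((h.hL_meas i n m).aestronglyMeasurable)
      filter_upwards [hLbd i n m] with ω hb
      rwa [Real.norm_eq_abs]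
    have hB1I : Integrable B1 Pr := (hVL1 i).const_mul _
    have hGI : Integrable G Pr := by
      rw [hG_def]
      exact ((((hB1I.sub (hT1I.smul _)).sub (hT2I.smul _)).sub (hT3I.smul _)).add
        (hQ1I.smul _)).add (hQ2I.smul _)
    -- pathwise bound
    have hpath : Vf (i+1) ≤ᵐ[Pr] G := by
      filter_upwards [h.hL_one i, h.hL_op i] with ω h1 h2
      have hstep := QCAux.step_bound hNpos h.hLbar_symm h.hLbar_psd h.hLbar_one hlamN0
        (fun y hy => h.hspec_hi y hy) h1 h2 (x i ω) (Υ i ω) (Ψ i ω) (h.hα_pos i).le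
      have hVrw : Vf (i+1) ω
          = ∑ n, perpOf (x i ω - α i • ((L i ω).mulVec (x i ω) + Υ i ω + Ψ i ω)) n ^ 2 := by
        simp only [hVf_def]
        rw [h.hrec i ω]
      rw [hVrw]
      refine le_trans hstep (le_of_eq ?_)
      simp only [hG_def, hB1_def, Pi.add_apply, Pi.sub_apply, Pi.smul_apply, smul_eq_mul]
      rw [hT1app ω, hT2app ω, hT3app ω]
      simp only [hpf_def, hQ1_def, hQ2_def, hVf_def]
      rw [← QCAux.inner_mulVec_eq_sum_prod (L i ω) (perpOf (x i ω))]
      ring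
    -- conditional expectations of the pieces
    have hceL : ∀ n m : Fin N, Pr[fun ω => L i ω n m|ℱ i] =ᵐ[Pr] fun _ => Lbar n m := by
      intro n m
      have h1 := condExp_indep_eq (μ := Pr) (hmL_le i) (ℱ.le i)
        ((hmL_self i n m).stronglyMeasurable) (hIndL i)
      rw [h.hL_mean i n m] at h1
      exact h1
    have hceT1 : Pr[T1|ℱ i] =ᵐ[Pr]
        fun ω => ∑ q : Fin N × Fin N, pf q.1 ω * pf q.2 ω * Lbar q.1 q.2 := by
      rw [hT1_def]
      refine (condExp_finsetSum (fun q _ => hT1tI q) (ℱ i)).trans ?_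
      have h2 : ∀ q : Fin N × Fin N, q ∈ (Finset.univ : Finset (Fin N × Fin N)) →
          Pr[fun ω => pf q.1 ω * pf q.2 ω * L i ω q.1 q.2|ℱ i] =ᵐ[Pr]
          fun ω => pf q.1 ω * pf q.2 ω * Lbar q.1 q.2 := by
        intro q _
        have hm : StronglyMeasurable[ℱ i] (fun ω => pf q.1 ω * pf q.2 ω) :=
          ((hpℱ i q.1).mul (hpℱ i q.2)).stronglyMeasurable
        have h3 := condExp_mul_of_stronglyMeasurable_left hm (hT1tI q) (hLI q.1 q.2)
        refine h3.trans ?_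
        filter_upwards [hceL q.1 q.2] with ω hω
        simp only [Pi.mul_apply, hω]
      refine (QCAux.ae_eq_sum Finset.univ h2).trans ?_
      filter_upwards with ω
      simp [Finset.sum_apply]
    have hceT2 : Pr[T2|ℱ i] =ᵐ[Pr] fun _ => (0:ℝ) := by
      rw [hT2_def]
      refine (condExp_finsetSum (fun n _ => hT2tI n) (ℱ i)).trans ?_
      have h2 : ∀ n : Fin N, n ∈ (Finset.univ : Finset (Fin N)) →
          Pr[fun ω => pf n ω * Υ i ω n|ℱ i] =ᵐ[Pr] (fun _ => (0:ℝ)) := by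
        intro n _
        have h3 := condExp_mul_of_stronglyMeasurable_left ((hpℱ i n).stronglyMeasurable)
          (hT2tI n) ((hΥc i n).integrable one_le_two)
        refine h3.trans ?_
        have h4 := condExp_indep_eq (μ := Pr) (hmU_le i) (ℱ.le i)
          ((hmU_self i n).stronglyMeasurable) (hIndU i)
        rw [h.hΥ_mean i n] at h4
        filter_upwards [h4] with ω hω
        simp only [Pi.mul_apply, hω, mul_zero]
      refine (QCAux.ae_eq_sum Finset.univ h2).trans ?_
      filter_upwards with ω
      simp [Finset.sum_apply]
    have hceT3 : Pr[T3|ℱ i] =ᵐ[Pr] fun _ => (0:ℝ) := by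
      rw [hT3_def]
      refine (condExp_finsetSum (fun n _ => hT3tI n) (ℱ i)).trans ?_
      have h2 : ∀ n : Fin N, n ∈ (Finset.univ : Finset (Fin N)) →
          Pr[fun ω => pf n ω * Ψ i ω n|ℱ i] =ᵐ[Pr] (fun _ => (0:ℝ)) := by
        intro n _
        have h3 := condExp_mul_of_stronglyMeasurable_left ((hpℱ i n).stronglyMeasurable)
          (hT3tI n) ((hΨc i n).integrable one_le_two)
        refine h3.trans ?_
        have h4 := condExp_indep_eq (μ := Pr) (hmP_le i) (ℱ.le i)
          ((hmP_self i n).stronglyMeasurable) (hIndP i)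
        rw [h.hΨ_mean i n] at h4
        filter_upwards [h4] with ω hω
        simp only [Pi.mul_apply, hω, mul_zero]
      refine (QCAux.ae_eq_sum Finset.univ h2).trans ?_
      filter_upwards with ω
      simp [Finset.sum_apply]
    have hQ1val : ∫ ω, Q1 ω ∂Pr ≤ M * Δ ^ 2 / 6 := by
      have e1 : ∫ ω, Q1 ω ∂Pr = ∫ ω, euclNorm (Υ i ω) ^ 2 ∂Pr := by
        apply integral_congr_ae
        filter_upwards with ω
        rw [hQ1_def, QCAux.euclNorm_sq]
      rw [e1]; exact h.hvar_le i
    have hQ2val : ∫ ω, Q2 ω ∂Pr ≤ M * Δ ^ 2 / 6 := by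
      have e1 : ∫ ω, Q2 ω ∂Pr = ∫ ω, euclNorm (Ψ i ω) ^ 2 ∂Pr := by
        apply integral_congr_ae
        filter_upwards with ω
        rw [hQ2_def, QCAux.euclNorm_sq]
      rw [e1, ← h.hvar_eq i]; exact h.hvar_le i
    have hceQ1 : Pr[Q1|ℱ i] =ᵐ[Pr] fun _ => ∫ ω, Q1 ω ∂Pr := by
      apply condExp_indep_eq (μ := Pr) (hmU_le i) (ℱ.le i) _ (hIndU i)
      exact (Finset.measurable_sum _ fun n _ =>
        ((hmU_self i n).pow_const 2)).stronglyMeasurable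
    have hceQ2 : Pr[Q2|ℱ i] =ᵐ[Pr] fun _ => ∫ ω, Q2 ω ∂Pr := by
      apply condExp_indep_eq (μ := Pr) (hmP_le i) (ℱ.le i) _ (hIndP i)
      exact (Finset.measurable_sum _ fun n _ =>
        ((hmP_self i n).pow_const 2)).stronglyMeasurable
    -- splitting the conditional expectation of G
    have hB1ce : Pr[B1|ℱ i] = B1 :=
      condExp_of_stronglyMeasurable (ℱ.le i)
        ((measurable_const.mul (hVℱ i)).stronglyMeasurable) hB1I
    have c1 : Pr[G|ℱ i] =ᵐ[Pr]
        Pr[B1 - (2*α i) • T1 - (2*α i) • T2 - (2*α i) • T3 + (3*α i ^ 2) • Q1|ℱ i]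
        + Pr[(3*α i ^ 2) • Q2|ℱ i] := by
      rw [hG_def]
      exact condExp_add ((((hB1I.sub (hT1I.smul _)).sub (hT2I.smul _)).sub
        (hT3I.smul _)).add (hQ1I.smul _)) (hQ2I.smul _) (ℱ i)
    have c2 : Pr[B1 - (2*α i) • T1 - (2*α i) • T2 - (2*α i) • T3 + (3*α i ^ 2) • Q1|ℱ i]
        =ᵐ[Pr] Pr[B1 - (2*α i) • T1 - (2*α i) • T2 - (2*α i) • T3|ℱ i]
        + Pr[(3*α i ^ 2) • Q1|ℱ i] :=
      condExp_add (((hB1I.sub (hT1I.smul _)).sub (hT2I.smul _)).sub (hT3I.smul _))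
        (hQ1I.smul _) (ℱ i)
    have c3 : Pr[B1 - (2*α i) • T1 - (2*α i) • T2 - (2*α i) • T3|ℱ i]
        =ᵐ[Pr] Pr[B1 - (2*α i) • T1 - (2*α i) • T2|ℱ i] - Pr[(2*α i) • T3|ℱ i] :=
      condExp_sub ((hB1I.sub (hT1I.smul _)).sub (hT2I.smul _)) (hT3I.smul _) (ℱ i)
    have c4 : Pr[B1 - (2*α i) • T1 - (2*α i) • T2|ℱ i]
        =ᵐ[Pr] Pr[B1 - (2*α i) • T1|ℱ i] - Pr[(2*α i) • T2|ℱ i] :=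
      condExp_sub (hB1I.sub (hT1I.smul _)) (hT2I.smul _) (ℱ i)
    have c5 : Pr[B1 - (2*α i) • T1|ℱ i] =ᵐ[Pr] Pr[B1|ℱ i] - Pr[(2*α i) • T1|ℱ i] :=
      condExp_sub hB1I (hT1I.smul _) (ℱ i)
    have s1 := condExp_smul (μ := Pr) (m := ℱ i) (2*α i) T1
    have s2 := condExp_smul (μ := Pr) (m := ℱ i) (2*α i) T2
    have s3 := condExp_smul (μ := Pr) (m := ℱ i) (2*α i) T3
    have s4 := condExp_smul (μ := Pr) (m := ℱ i) (3*α i ^ 2) Q1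
    have s5 := condExp_smul (μ := Pr) (m := ℱ i) (3*α i ^ 2) Q2
    -- conclusion
    have hGce : Pr[G|ℱ i] ≤ᵐ[Pr]
        fun ω => (1 + a i) * Vf i ω - 2 * lam2 * α i * Vf i ω + cs i := by
      filter_upwards [c1, c2, c3, c4, c5, s1, s2, s3, s4, s5,
        hceT1, hceT2, hceT3, hceQ1, hceQ2] with ω e1 e2 e3 e4 e5 f1 f2 f3 f4 f5 g1 g2 g3 g4 g5
      simp only [Pi.add_apply, Pi.sub_apply, Pi.smul_apply, smul_eq_mul] at e1 e2 e3 e4 e5 f1 f2 f3 f4 f5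
      rw [e1, e2, e3, e4, e5, f1, f2, f3, f4, f5, hB1ce, g1, g2, g3, g4, g5]
      -- now everything is pointwise
      have hquad : lam2 * Vf i ω ≤ ∑ q : Fin N × Fin N, pf q.1 ω * pf q.2 ω * Lbar q.1 q.2 := by
        rw [hpf_def]
        rw [← QCAux.quadForm_eq_sum_prod Lbar (perpOf (x i ω))]
        have hlow := h.hspec_lo (perpOf (x i ω)) (QCAux.sum_perpOf hNpos (x i ω))
        rw [QCAux.euclNorm_sq] at hlow
        simpa [hVf_def] using hlow
      have hα := (h.hα_pos i).le
      have hstep1 : -(2*α i * (∑ q : Fin N × Fin N, pf q.1 ω * pf q.2 ω * Lbar q.1 q.2))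
          ≤ -(2*α i * (lam2 * Vf i ω)) := by
        apply neg_le_neg
        apply mul_le_mul_of_nonneg_left hquad
        positivity
      have hstep2 : 3*α i ^ 2 * (∫ ω', Q1 ω' ∂Pr) + 3*α i ^ 2 * (∫ ω', Q2 ω' ∂Pr)
          ≤ cs i := by
        have hb1 : 3*α i ^ 2 * (∫ ω', Q1 ω' ∂Pr) ≤ 3*α i ^ 2 * (M * Δ ^ 2 / 6) := by
          apply mul_le_mul_of_nonneg_left hQ1val; positivity
        have hb2 : 3*α i ^ 2 * (∫ ω', Q2 ω' ∂Pr) ≤ 3*α i ^ 2 * (M * Δ ^ 2 / 6) := by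
          apply mul_le_mul_of_nonneg_left hQ2val; positivity
        simp only [hcs_def]
        nlinarith
      simp only [hB1_def]
      nlinarith [hstep1, hstep2]
    exact (condExp_mono (hVL1 (i+1)) hGI hpath).trans hGce
  -- the supermartingale
  set U : ℕ → Ω → ℝ := fun n ω => QCAux.Aprod a n * Vf n ω +
      ∑ j ∈ Finset.range n, QCAux.Aprod a (j+1) * (2 * lam2 * α j * Vf j ω - cs j)
    with hU_def
  have hApos := QCAux.Aprod_pos ha0
  have hAub := QCAux.Aprod_le_one ha0
  have hUadp : StronglyAdapted ℱ U := by
    intro n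
    apply Measurable.stronglyMeasurable
    apply Measurable.add (measurable_const.mul (hVℱ n))
    apply Finset.measurable_sum
    intro j hj
    have hVj : Measurable[ℱ n] (Vf j) :=
      (hVℱ j).mono (ℱ.mono (Nat.le_of_lt_succ (Nat.lt_succ_of_lt (Finset.mem_range.1 hj)))) le_rfl
    exact ((measurable_const.mul hVj).sub measurable_const).const_mul _
  have hUint : ∀ n, Integrable (U n) Pr := by
    intro n
    apply Integrable.add ((hVL1 n).const_mul _)
    apply integrable_finset_sum
    intro j _
    exact (((hVL1 j).const_mul _).sub (integrable_const _)).const_mul _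
  have hstep : ∀ n, Pr[U (n+1)|ℱ n] ≤ᵐ[Pr] U n := by
    intro n
    set S : Ω → ℝ := fun ω =>
      ∑ j ∈ Finset.range (n+1), QCAux.Aprod a (j+1) * (2 * lam2 * α j * Vf j ω - cs j)
      with hS_def
    have hSI : Integrable S Pr := by
      apply integrable_finset_sum
      intro j _
      exact (((hVL1 j).const_mul _).sub (integrable_const _)).const_mul _
    have hSm : StronglyMeasurable[ℱ n] S := by
      apply Measurable.stronglyMeasurable
      apply Finset.measurable_sum
      intro j hj
      have hVj : Measurable[ℱ n] (Vf j) :=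
        (hVℱ j).mono (ℱ.mono (Nat.lt_succ_iff.1 (Finset.mem_range.1 hj))) le_rfl
      exact ((measurable_const.mul hVj).sub measurable_const).const_mul _
    have hdecomp : U (n+1) = QCAux.Aprod a (n+1) • Vf (n+1) + S := by
      funext ω
      simp only [hU_def, hS_def, Pi.add_apply, Pi.smul_apply, smul_eq_mul]
    rw [hdecomp]
    have e1 := condExp_add (μ := Pr) ((hVL1 (n+1)).smul (QCAux.Aprod a (n+1))) hSI
      (m := ℱ n)
    have e2 := condExp_smul (μ := Pr) (m := ℱ n) (QCAux.Aprod a (n+1)) (Vf (n+1))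
    have e3 := condExp_of_stronglyMeasurable (ℱ.le n) hSm hSI
    have hAc : QCAux.Aprod a (n+1) * (1 + a n) = QCAux.Aprod a n := by
      rw [QCAux.Aprod_succ]
      have h1 : (0:ℝ) < 1 + a n := by linarith [ha0 n]
      field_simp
    filter_upwards [e1, e2, hcond n] with ω f1 f2 f3
    rw [f1]
    simp only [Pi.add_apply, Pi.smul_apply, smul_eq_mul] at f2 ⊢
    rw [f2, e3]
    have hAnn : 0 ≤ QCAux.Aprod a (n+1) := (hApos (n+1)).le
    have hmul := mul_le_mul_of_nonneg_left f3 hAnn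
    have hSval : S ω = (∑ j ∈ Finset.range n, QCAux.Aprod a (j+1)
        * (2 * lam2 * α j * Vf j ω - cs j))
        + QCAux.Aprod a (n+1) * (2 * lam2 * α n * Vf n ω - cs n) := by
      simp only [hS_def]
      rw [Finset.sum_range_succ]
    rw [hSval]
    simp only [hU_def]
    have hx : QCAux.Aprod a (n+1) * ((1 + a n) * Vf n ω - 2 * lam2 * α n * Vf n ω + cs n)
        = QCAux.Aprod a n * Vf n ω
          - QCAux.Aprod a (n+1) * (2 * lam2 * α n * Vf n ω - cs n) := by
      rw [← hAc]; ring
    linarith [hmul, hx]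
  have hsuper : Supermartingale U ℱ Pr := supermartingale_nat hUadp hUint hstep
  -- L¹ boundedness
  set K0 : ℝ := ∑' j, cs j with hK0_def
  have hK0nn : 0 ≤ K0 := tsum_nonneg hcs0
  have hUlb : ∀ n ω, -K0 ≤ U n ω := by
    intro n ω
    have h1 : ∀ j ∈ Finset.range n, -cs j ≤ QCAux.Aprod a (j+1)
        * (2 * lam2 * α j * Vf j ω - cs j) := by
      intro j _
      have hb : 0 ≤ 2 * lam2 * α j * Vf j ω := by
        have := (h.hα_pos j).le; have := hVnn j ω; have := h.hlam2_pos.le; positivity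
      have h2 : QCAux.Aprod a (j+1) * cs j ≤ cs j := by
        calc QCAux.Aprod a (j+1) * cs j ≤ 1 * cs j :=
              mul_le_mul_of_nonneg_right (hAub _) (hcs0 j)
          _ = cs j := one_mul _
      nlinarith [(hApos (j+1)).le, mul_nonneg (hApos (j+1)).le hb]
    have h3 : -(∑ j ∈ Finset.range n, cs j) ≤ ∑ j ∈ Finset.range n,
        QCAux.Aprod a (j+1) * (2 * lam2 * α j * Vf j ω - cs j) := by
      rw [← Finset.sum_neg_distrib]
      exact Finset.sum_le_sum h1
    have h4 : ∑ j ∈ Finset.range n, cs j ≤ K0 :=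
      Summable.sum_le_tsum _ (fun j _ => hcs0 j) hcssum
    have h5 : 0 ≤ QCAux.Aprod a n * Vf n ω := mul_nonneg (hApos n).le (hVnn n ω)
    simp only [hU_def]
    linarith
  have hEU : ∀ n, ∫ ω, U n ω ∂Pr ≤ ∫ ω, U 0 ω ∂Pr := by
    intro n
    induction n with
    | zero => exact le_rfl
    | succ n ih =>
      have h1 : ∫ ω, U (n+1) ω ∂Pr = ∫ ω, (Pr[U (n+1)|ℱ n]) ω ∂Pr :=
        (integral_condExp (ℱ.le n)).symm
      have h2 : ∫ ω, (Pr[U (n+1)|ℱ n]) ω ∂Pr ≤ ∫ ω, U n ω ∂Pr :=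
        integral_mono_ae integrable_condExp (hUint n) (hstep n)
      linarith
  set R : ℝ≥0 := (∫ ω, U 0 ω ∂Pr + 2 * K0).toNNReal with hR_def
  have hbdd : ∀ n, eLpNorm (U n) 1 Pr ≤ (R : ℝ≥0∞) := by
    intro n
    rw [eLpNorm_one_eq_lintegral_enorm]
    have h2 : ∫⁻ ω, ‖U n ω‖₊ ∂Pr ≤ ∫⁻ ω, ENNReal.ofReal (U n ω + 2 * K0) ∂Pr := by
      apply lintegral_mono
      intro ω
      show (‖U n ω‖₊ : ℝ≥0∞) ≤ ENNReal.ofReal (U n ω + 2 * K0)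
      calc (‖U n ω‖₊ : ℝ≥0∞) = ENNReal.ofReal ‖U n ω‖ := (ofReal_norm _).symm
        _ ≤ ENNReal.ofReal (U n ω + 2 * K0) := by
            apply ENNReal.ofReal_le_ofReal
            rw [Real.norm_eq_abs]
            have := hUlb n ω
            rw [abs_le]
            constructor <;> linarith
    have h3 : ∫⁻ ω, ENNReal.ofReal (U n ω + 2 * K0) ∂Pr
        = ENNReal.ofReal (∫ ω, (U n ω + 2 * K0) ∂Pr) := by
      refine (ofReal_integral_eq_lintegral_ofReal ((hUint n).add (integrable_const _))
        (Eventually.of_forall fun ω => ?_)).symm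
      have := hUlb n ω
      show (0:ℝ) ≤ U n ω + 2 * K0
      linarith
    have h4 : ∫ ω, (U n ω + 2 * K0) ∂Pr = (∫ ω, U n ω ∂Pr) + 2 * K0 := by
      rw [integral_add (hUint n) (integrable_const _), integral_const]
      simp [measure_univ]
    calc ∫⁻ ω, ‖U n ω‖₊ ∂Pr ≤ ENNReal.ofReal (∫ ω, (U n ω + 2 * K0) ∂Pr) := by
          rw [← h3]; exact h2
      _ ≤ ENNReal.ofReal (∫ ω, U 0 ω ∂Pr + 2 * K0) := by
          rw [h4]; exact ENNReal.ofReal_le_ofReal (by linarith [hEU n])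
      _ = (R : ℝ≥0∞) := rfl
  -- convergence of U
  have hconvU : ∀ᵐ ω ∂Pr, ∃ c, Tendsto (fun n => U n ω) atTop (𝓝 c) := by
    have hsub : Submartingale (-U) ℱ Pr := hsuper.neg
    have hbdd' : ∀ n, eLpNorm ((-U) n) 1 Pr ≤ (R : ℝ≥0∞) := by
      intro n
      have : (-U) n = -(U n) := rfl
      rw [this, eLpNorm_neg]
      exact hbdd n
    filter_upwards [hsub.exists_ae_tendsto_of_bdd hbdd'] with ω hω
    obtain ⟨c, hc⟩ := hω
    refine ⟨-c, ?_⟩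
    have h2 := hc.neg
    simp only [Pi.neg_apply, neg_neg] at h2
    exact h2
  -- conclusion
  filter_upwards [hconvU] with ω hω
  have hVlim : Tendsto (fun n => Vf n ω) atTop (𝓝 0) := by
    apply QCAux.path_limit h.hlam2_pos h.hα_pos h.hα_div ha0 hasum hcs0 hcssum
      (fun n => hVnn n ω)
    obtain ⟨c, hc⟩ := hω
    exact ⟨c, hc⟩
  have hlim2 : Tendsto (fun i => Real.sqrt (Vf i ω)) atTop (𝓝 0) := by
    have h1 := (Real.continuous_sqrt.tendsto 0).comp hVlim
    rwa [Real.sqrt_zero] at h1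
  exact hlim2
end
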